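/- arXiv:1602.04417 — 2 statements merged into one kernel-verified Lean document; each statement's English description precedes it below -/
import Mathlib

section
/- For every element x of a topological group G and every integer n ≥ 1, the contraction subgroup of xⁿ equals the contraction subgroup of x: con(xⁿ) = con(x). -/
open Filter

/-- If a sequence tends to `l` along each arithmetic progression mod `n`, it tends to `l`. -/
lemma tendsto_of_residues {α : Type*} {l : Filter α} {f : ℕ → α} {n : ℕ} (hn : 0 < n)
    (h : ∀ r < n, Tendsto (fun q => f (n * q + r)) atTop l) : Tendsto f atTop l := by
  rw [Filter.tendsto_def]
  intro s hs
  have key : ∀ r < n, ∃ N, ∀ q ≥ N, f (n * q + r) ∈ s := by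
    intro r hr
    have := (h r hr) hs
    rw [Filter.mem_map, Filter.mem_atTop_sets] at this
    obtain ⟨N, hN⟩ := this
    exact ⟨N, fun q hq => hN q hq⟩
  choose N' hN' using fun r (hr : r < n) => key r hr
  rw [Filter.mem_atTop_sets]
  -- bound
  obtain ⟨M, hM⟩ : ∃ M, ∀ r (hr : r < n), N' r hr ≤ M := by
    refine ⟨(Finset.range n).sup (fun r => if hr : r < n then N' r hr else 0), ?_⟩
    intro r hr
    have := Finset.le_sup (f := fun r => if hr : r < n then N' r hr else 0)
      (Finset.mem_range.mpr hr)
    simpa [hr] using this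
  refine ⟨n * (M + 1), fun k hk => ?_⟩
  have hr : k % n < n := Nat.mod_lt _ hn
  have hq : M ≤ k / n := by
    have : M + 1 ≤ k / n := (Nat.le_div_iff_mul_le hn).mpr (by nlinarith)
    omega
  have := hN' (k % n) hr (k / n) (le_trans (hM _ hr) hq)
  rwa [Nat.div_add_mod] at this

/-- con(xⁿ) = con(x) for every n ≥ 1. -/
theorem contraction_pow {G : Type*} [Group G] [TopologicalSpace G]
    [IsTopologicalGroup G] (x : G) (n : ℕ) (hn : 1 ≤ n) :
    {g : G | Filter.Tendsto (fun k : ℕ => (x ^ n) ^ k * g * ((x ^ n)⁻¹) ^ k)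
      Filter.atTop (nhds 1)} =
    {g : G | Filter.Tendsto (fun k : ℕ => x ^ k * g * x⁻¹ ^ k)
      Filter.atTop (nhds 1)} := by
  have hn0 : 0 < n := hn
  ext g
  simp only [Set.mem_setOf_eq]
  have key : ∀ k : ℕ, (x ^ n) ^ k * g * ((x ^ n)⁻¹) ^ k = x ^ (n * k) * g * x⁻¹ ^ (n * k) := by
    intro k
    rw [← pow_mul, ← inv_pow, ← pow_mul]
  constructor
  · intro h
    have h' : Tendsto (fun q : ℕ => x ^ (n * q) * g * x⁻¹ ^ (n * q)) atTop (nhds 1) :=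
      h.congr key
    apply tendsto_of_residues hn0
    intro r hr
    have h2 : Tendsto (fun q : ℕ => x ^ r * (x ^ (n * q) * g * x⁻¹ ^ (n * q)) * x⁻¹ ^ r)
        atTop (nhds (x ^ r * 1 * x⁻¹ ^ r)) := (h'.const_mul _).mul_const _
    have : Tendsto (fun q : ℕ => x ^ r * (x ^ (n * q) * g * x⁻¹ ^ (n * q)) * x⁻¹ ^ r)
        atTop (nhds 1) := by simpa using h2
    convert this using 2 with q
    rw [pow_add, pow_add, pow_mul_comm, mul_assoc, mul_assoc, mul_assoc, mul_assoc,
      mul_assoc]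
  · intro h
    have hmono : Tendsto (fun k : ℕ => n * k) atTop atTop :=
      Filter.tendsto_atTop_atTop_of_monotone (fun a b hab => Nat.mul_le_mul_left n hab)
        (fun b => ⟨b, Nat.le_mul_of_pos_left b hn0⟩)
    exact ((h.comp hmono).congr fun k => (key k).symm)
end

section
/- If x ∈ G normalizes a compact open subgroup V and xⁿ lies in a compact subgroup K containing V for some n ≥ 1, then the cyclic subgroup generated by x has compact closure. -/
open scoped Pointwise

/-- If x normalizes a compact open subgroup V and xⁿ lies in a compact
subgroup K containing V, then ⟨x⟩ has compact closure. -/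
theorem cyclic_precompact {G : Type*} [Group G] [TopologicalSpace G]
    [IsTopologicalGroup G] [T2Space G]
    (V K : Subgroup G) (hVc : IsCompact (V : Set G)) (hVo : IsOpen (V : Set G))
    (hKc : IsCompact (K : Set G)) (hVK : V ≤ K)
    (x : G) (hnorm : MulAut.conj x • V = V) (n : ℕ) (hn : 1 ≤ n) (hxn : x ^ n ∈ K) :
    IsCompact (closure ((Subgroup.zpowers x : Subgroup G) : Set G)) := by
  have hn0 : (0:ℤ) < (n:ℤ) := by exact_mod_cast hn
  set S : Set G := ⋃ i ∈ Finset.range n, (x ^ i) • (K : Set G) with hS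
  have hSc : IsCompact S :=
    (Finset.range n).finite_toSet.isCompact_biUnion fun i _ => hKc.smul (x ^ i)
  have hsub : ((Subgroup.zpowers x : Subgroup G) : Set G) ⊆ S := by
    rintro g ⟨m, rfl⟩
    have h0 : (0:ℤ) ≤ m % n := Int.emod_nonneg m hn0.ne'
    have key : x ^ m = x ^ ((m % n).toNat) * (x ^ n) ^ (m / n) := by
      rw [← zpow_natCast x ((m % n).toNat), Int.toNat_of_nonneg h0,
        ← zpow_natCast x n, ← zpow_mul, ← zpow_add, Int.emod_add_mul_ediv]
    have hmem : (m % n).toNat ∈ Finset.range n := by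
      have : m % n < n := Int.emod_lt_of_pos m hn0
      rw [Finset.mem_range]; omega
    exact Set.mem_biUnion hmem ⟨(x ^ n) ^ (m / n), K.zpow_mem hxn _, key.symm⟩
  exact hSc.of_isClosed_subset isClosed_closure
    (closure_minimal hsub hSc.isClosed)
end
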